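/- arXiv:2108.06176 — 6 statements merged into one kernel-verified Lean document; each statement's English description precedes it below -/
import Mathlib

section
/- Let γ > 0 and fix u₀, ρ₀, a₀ > 0. Suppose (u(x), ρ(x), a(x)) is a smooth solution on an interval with u, ρ, a > 0 satisfying (aρu)' = 0 and (aρu(u+ρ^γ))' = ρuρ^γ a'. Then along the solution the quantity u^{γ/(1+γ)}(ρ^γ + (γ/(1+2γ))u) is constant. -/
open Real Set

/-- Along smooth positive stationary solutions of (aρu)' = 0 and
(aρu(u+ρ^γ))' = ρuρ^γ a', the quantity u^{γ/(1+γ)}(ρ^γ + (γ/(1+2γ))u)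
is constant. -/
theorem stmt_2 (γ : ℝ) (hγ : 0 < γ) (I : Set ℝ) (hI : Convex ℝ I)
    (u ρ a : ℝ → ℝ)
    (hu : ∀ x ∈ I, 0 < u x) (hρ : ∀ x ∈ I, 0 < ρ x) (ha : ∀ x ∈ I, 0 < a x)
    (hus : ContDiffOn ℝ 1 u I) (hρs : ContDiffOn ℝ 1 ρ I)
    (has : ContDiffOn ℝ 1 a I)
    (h1 : ∀ x ∈ I, deriv (fun y => a y * ρ y * u y) x = 0)
    (h2 : ∀ x ∈ I, deriv (fun y => a y * ρ y * u y * (u y + ρ y ^ γ)) x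
        = ρ x * u x * ρ x ^ γ * deriv a x) :
    ∀ x ∈ I, ∀ y ∈ I,
      u x ^ (γ / (1 + γ)) * (ρ x ^ γ + (γ / (1 + 2 * γ)) * u x)
        = u y ^ (γ / (1 + γ)) * (ρ y ^ γ + (γ / (1 + 2 * γ)) * u y) := by
  have key : ∀ x ∈ I, ∀ y ∈ I, x < y →
      u x ^ (γ / (1 + γ)) * (ρ x ^ γ + (γ / (1 + 2 * γ)) * u x)
        = u y ^ (γ / (1 + γ)) * (ρ y ^ γ + (γ / (1 + 2 * γ)) * u y) := by
    intro x hx y hy hxy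
    have hsub : Icc x y ⊆ I := hI.ordConnected.out hx hy
    set Q : ℝ → ℝ := fun t => u t ^ (γ / (1 + γ)) * (ρ t ^ γ + (γ / (1 + 2 * γ)) * u t)
      with hQdef
    have hcont : ContinuousOn Q (Icc x y) := by
      apply ContinuousOn.mul
      · exact (hus.continuousOn.mono hsub).rpow_const (fun t ht => Or.inr (by positivity))
      · exact ((hρs.continuousOn.mono hsub).rpow_const (fun t ht => Or.inr hγ.le)).add
          (continuousOn_const.mul (hus.continuousOn.mono hsub))
    have hderiv : ∀ t ∈ Ioo x y, HasDerivAt Q 0 t := by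
      intro t ht
      have htI : t ∈ I := hsub (Ioo_subset_Icc_self ht)
      have hnI : I ∈ nhds t :=
        Filter.mem_of_superset (Ioo_mem_nhds ht.1 ht.2)
          (fun z hz => hsub (Ioo_subset_Icc_self hz))
      have hu' : HasDerivAt u (deriv u t) t :=
        ((hus.differentiableOn one_ne_zero t htI).differentiableAt hnI).hasDerivAt
      have hρ' : HasDerivAt ρ (deriv ρ t) t :=
        ((hρs.differentiableOn one_ne_zero t htI).differentiableAt hnI).hasDerivAt
      have ha' : HasDerivAt a (deriv a t) t :=
        ((has.differentiableOn one_ne_zero t htI).differentiableAt hnI).hasDerivAt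
      have hu0 := hu t htI
      have hρ0 := hρ t htI
      have ha0 := ha t htI
      have hP : HasDerivAt (fun y => ρ y ^ γ) (deriv ρ t * γ * ρ t ^ (γ - 1)) t :=
        hρ'.rpow_const (Or.inl hρ0.ne')
      have hA : HasDerivAt (fun y => a y * ρ y * u y)
          ((deriv a t * ρ t + a t * deriv ρ t) * u t + a t * ρ t * deriv u t) t :=
        (ha'.mul hρ').mul hu'
      have hE1 := h1 t htI
      rw [hA.deriv] at hE1
      have hB : HasDerivAt (fun y => a y * ρ y * u y * (u y + ρ y ^ γ))
          (((deriv a t * ρ t + a t * deriv ρ t) * u t + a t * ρ t * deriv u t)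
              * (u t + ρ t ^ γ)
            + a t * ρ t * u t * (deriv u t + deriv ρ t * γ * ρ t ^ (γ - 1))) t :=
        hA.mul (hu'.add hP)
      have hE2 := h2 t htI
      rw [hB.deriv] at hE2
      have hQU : HasDerivAt (fun y => u y ^ (γ / (1 + γ)))
          (deriv u t * (γ / (1 + γ)) * u t ^ (γ / (1 + γ) - 1)) t :=
        hu'.rpow_const (Or.inl hu0.ne')
      have hQ : HasDerivAt Q
          (deriv u t * (γ / (1 + γ)) * u t ^ (γ / (1 + γ) - 1)
              * (ρ t ^ γ + (γ / (1 + 2 * γ)) * u t)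
            + u t ^ (γ / (1 + γ))
              * (deriv ρ t * γ * ρ t ^ (γ - 1) + (γ / (1 + 2 * γ)) * deriv u t)) t :=
        hQU.mul (hP.add (hu'.const_mul _))
      have hru : u t ^ (γ / (1 + γ) - 1) = u t ^ (γ / (1 + γ)) / u t := by
        rw [rpow_sub hu0, rpow_one]
      have hrρ : ρ t ^ (γ - 1) = ρ t ^ γ / ρ t := by
        rw [rpow_sub hρ0, rpow_one]
      rw [hrρ] at hE2
      rw [hru, hrρ] at hQ
      -- show derivative value is zero
      have hUpos : (0:ℝ) < u t ^ (γ / (1 + γ)) := rpow_pos_of_pos hu0 _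
      have hPpos : (0:ℝ) < ρ t ^ γ := rpow_pos_of_pos hρ0 _
      have hγ1 : (0:ℝ) < 1 + γ := by linarith
      have hγ2 : (0:ℝ) < 1 + 2 * γ := by linarith
      have hstar : (a t * ρ t) * (ρ t * u t * deriv u t
          + (γ + 1) * u t * ρ t ^ γ * deriv ρ t + ρ t ^ γ * ρ t * deriv u t) = 0 := by
        field_simp at hE2
        linear_combination ρ t * hE2 - ρ t * u t * hE1
      have hstar' : ρ t * u t * deriv u t
          + (γ + 1) * u t * ρ t ^ γ * deriv ρ t + ρ t ^ γ * ρ t * deriv u t = 0 := by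
        rcases mul_eq_zero.1 hstar with h | h
        · exact absurd h (mul_ne_zero ha0.ne' hρ0.ne')
        · exact h
      have hzero : deriv u t * (γ / (1 + γ)) * (u t ^ (γ / (1 + γ)) / u t)
              * (ρ t ^ γ + (γ / (1 + 2 * γ)) * u t)
            + u t ^ (γ / (1 + γ))
              * (deriv ρ t * γ * (ρ t ^ γ / ρ t) + (γ / (1 + 2 * γ)) * deriv u t) = 0 := by
        field_simp
        linear_combination (γ * (1 + 2 * γ) * u t ^ (γ / (1 + γ))) * hstar'
      exact hzero ▸ hQ
    obtain ⟨c, hc, hc0⟩ := exists_hasDerivAt_eq_slope Q (fun _ => 0) hxy hcont hderiv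
    have hyx : y - x ≠ 0 := sub_ne_zero.2 hxy.ne'
    have hQeq : Q y - Q x = 0 := (div_eq_zero_iff.mp hc0.symm).resolve_right hyx
    show Q x = Q y
    linarith
  intro x hx y hy
  rcases lt_trichotomy x y with h | h | h
  · exact key x hx y hy h
  · rw [h]
  · exact (key y hy x hx h).symm
end

section
/- Let γ > 0 and let u₀, ρ₀, a₀, a > 0 with k₀ = (a₀ρ₀u₀/a)^{γ/(1+γ)}, k₁ = u₀^{γ/(1+γ)}(ρ₀^γ + (γ/(1+2γ))u₀), k₂ = (γ/(1+2γ))(a₀ρ₀u₀/a)^{(1+2γ)/(1+γ)}. If ρ > 0 satisfies k₀ρ^{γ+1} - k₁ρ^{(1+2γ)/(1+γ)} + k₂ = 0 and ρ < ρ_min = (k₁(1+2γ)/(k₀(γ+1)²))^{(1+γ)/γ²}, then the corresponding velocity u = a₀ρ₀u₀/(aρ) satisfies u > γρ^γ (i.e., the state lies in the supersonic region D₂). -/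
open Real Set

/-- A root ρ of the stationary-contact equation with ρ < ρ_min gives a state in
the supersonic region D₂: the velocity u = a₀ρ₀u₀/(aρ) satisfies u > γρ^γ. -/
theorem stmt_7 (γ u₀ ρ₀ a₀ a : ℝ) (hγ : 0 < γ)
    (hu₀ : 0 < u₀) (hρ₀ : 0 < ρ₀) (ha₀ : 0 < a₀) (ha : 0 < a)
    (k₀ k₁ k₂ : ℝ)
    (hk₀ : k₀ = (a₀ * ρ₀ * u₀ / a) ^ (γ / (1 + γ)))
    (hk₁ : k₁ = u₀ ^ (γ / (1 + γ)) * (ρ₀ ^ γ + (γ / (1 + 2 * γ)) * u₀))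
    (hk₂ : k₂ = (γ / (1 + 2 * γ)) * (a₀ * ρ₀ * u₀ / a) ^ ((1 + 2 * γ) / (1 + γ)))
    (ρ : ℝ) (hρ : 0 < ρ)
    (hroot : k₀ * ρ ^ (γ + 1) - k₁ * ρ ^ ((1 + 2 * γ) / (1 + γ)) + k₂ = 0)
    (hlt : ρ < (k₁ * (1 + 2 * γ) / (k₀ * (γ + 1) ^ 2)) ^ ((1 + γ) / γ ^ 2))
    (u : ℝ) (hu : u = a₀ * ρ₀ * u₀ / (a * ρ)) :
    γ * ρ ^ γ < u := by
  have hc : 0 < a₀ * ρ₀ * u₀ / a := by positivity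
  set c := a₀ * ρ₀ * u₀ / a with hcdef
  have h1γ : (0:ℝ) < 1 + γ := by linarith
  have h12γ : (0:ℝ) < 1 + 2 * γ := by linarith
  have hk₀pos : 0 < k₀ := by rw [hk₀]; positivity
  have hk₁pos : 0 < k₁ := by
    rw [hk₁]
    have := Real.rpow_pos_of_pos hρ₀ γ
    positivity
  have hk₂pos : 0 < k₂ := by rw [hk₂]; positivity
  have hM : 0 < k₁ * (1 + 2 * γ) / (k₀ * (γ + 1) ^ 2) := by positivity
  have hp : 0 < γ ^ 2 / (1 + γ) := by positivity
  -- from hlt, raise to power γ²/(1+γ)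
  have h1 : ρ ^ (γ ^ 2 / (1 + γ)) < k₁ * (1 + 2 * γ) / (k₀ * (γ + 1) ^ 2) := by
    have h2 := Real.rpow_lt_rpow hρ.le hlt hp
    rw [← Real.rpow_mul hM.le] at h2
    have he : (1 + γ) / γ ^ 2 * (γ ^ 2 / (1 + γ)) = 1 := by
      field_simp
    rwa [he, Real.rpow_one] at h2
  have h1' : k₀ * (γ + 1) ^ 2 * ρ ^ (γ ^ 2 / (1 + γ)) < k₁ * (1 + 2 * γ) := by
    have hd : 0 < k₀ * (γ + 1) ^ 2 := by positivity
    have := (lt_div_iff₀ hd).mp h1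
    linarith [this]
  -- exponent arithmetic
  have hE1 : ρ ^ (γ ^ 2 / (1 + γ)) * ρ ^ ((1 + 2 * γ) / (1 + γ)) = ρ ^ (γ + 1) := by
    rw [← Real.rpow_add hρ]
    congr 1
    field_simp
    ring
  have hE2 : c ^ ((1 + 2 * γ) / (1 + γ)) = c ^ (γ / (1 + γ)) * c := by
    have he : (1 + 2 * γ) / (1 + γ) = γ / (1 + γ) + 1 := by field_simp; ring
    rw [he, Real.rpow_add_one hc.ne']
  have hk₂' : k₂ = γ / (1 + 2 * γ) * (k₀ * c) := by
    rw [hk₂, hE2, hk₀]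
  have hB : 0 < ρ ^ ((1 + 2 * γ) / (1 + γ)) := Real.rpow_pos_of_pos hρ _
  have hA : 0 < ρ ^ (γ + 1) := Real.rpow_pos_of_pos hρ _
  -- multiply h1' by ρ^((1+2γ)/(1+γ)) and use hroot
  have h3 : k₀ * (γ + 1) ^ 2 * ρ ^ (γ + 1)
      < (1 + 2 * γ) * (k₀ * ρ ^ (γ + 1) + k₂) := by
    have hm := mul_lt_mul_of_pos_right h1' hB
    have hroot' : k₁ * ρ ^ ((1 + 2 * γ) / (1 + γ)) = k₀ * ρ ^ (γ + 1) + k₂ := by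
      linarith
    calc k₀ * (γ + 1) ^ 2 * ρ ^ (γ + 1)
        = k₀ * (γ + 1) ^ 2 * ρ ^ (γ ^ 2 / (1 + γ)) * ρ ^ ((1 + 2 * γ) / (1 + γ)) := by
          rw [← hE1]; ring
      _ < k₁ * (1 + 2 * γ) * ρ ^ ((1 + 2 * γ) / (1 + γ)) := hm
      _ = (1 + 2 * γ) * (k₁ * ρ ^ ((1 + 2 * γ) / (1 + γ))) := by ring
      _ = (1 + 2 * γ) * (k₀ * ρ ^ (γ + 1) + k₂) := by rw [hroot']
  -- conclude γ ρ^{γ+1} < c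
  have h4 : γ * ρ ^ (γ + 1) < c := by
    have h5 : γ ^ 2 * (k₀ * ρ ^ (γ + 1)) < (1 + 2 * γ) * k₂ := by nlinarith
    rw [hk₂'] at h5
    have h6 : γ ^ 2 * (k₀ * ρ ^ (γ + 1)) < γ * (k₀ * c) := by
      calc γ ^ 2 * (k₀ * ρ ^ (γ + 1)) < (1 + 2 * γ) * (γ / (1 + 2 * γ) * (k₀ * c)) := h5
        _ = γ * (k₀ * c) := by field_simp
    have hgk : 0 < γ * k₀ := by positivity
    have h7 : γ * k₀ * (γ * ρ ^ (γ + 1)) < γ * k₀ * c := by nlinarith [h6]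
    exact lt_of_mul_lt_mul_left h7 hgk.le
  -- finish
  have hρpow : ρ ^ (γ + 1) = ρ ^ γ * ρ := Real.rpow_add_one hρ.ne' γ
  rw [hu, show a₀ * ρ₀ * u₀ / (a * ρ) = c / ρ by rw [hcdef, div_div]]
  rw [lt_div_iff₀ hρ]
  rw [hρpow] at h4
  linarith [h4]
end

section
/- Under the same stationary-contact setup, if ρ > ρ_min is a root of F(ρ) = 0, then the corresponding velocity u = a₀ρ₀u₀/(aρ) satisfies u < γρ^γ (i.e., the state lies in the subsonic region D₁). -/
open Real Set

/-- A root ρ of the stationary-contact equation with ρ > ρ_min gives a state in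
the subsonic region D₁: the velocity u = a₀ρ₀u₀/(aρ) satisfies u < γρ^γ. -/
theorem stmt_8 (γ u₀ ρ₀ a₀ a : ℝ) (hγ : 0 < γ)
    (hu₀ : 0 < u₀) (hρ₀ : 0 < ρ₀) (ha₀ : 0 < a₀) (ha : 0 < a)
    (k₀ k₁ k₂ : ℝ)
    (hk₀ : k₀ = (a₀ * ρ₀ * u₀ / a) ^ (γ / (1 + γ)))
    (hk₁ : k₁ = u₀ ^ (γ / (1 + γ)) * (ρ₀ ^ γ + (γ / (1 + 2 * γ)) * u₀))
    (hk₂ : k₂ = (γ / (1 + 2 * γ)) * (a₀ * ρ₀ * u₀ / a) ^ ((1 + 2 * γ) / (1 + γ)))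
    (ρ : ℝ) (hρ : 0 < ρ)
    (hroot : k₀ * ρ ^ (γ + 1) - k₁ * ρ ^ ((1 + 2 * γ) / (1 + γ)) + k₂ = 0)
    (hgt : (k₁ * (1 + 2 * γ) / (k₀ * (γ + 1) ^ 2)) ^ ((1 + γ) / γ ^ 2) < ρ)
    (u : ℝ) (hu : u = a₀ * ρ₀ * u₀ / (a * ρ)) :
    u < γ * ρ ^ γ := by
  have hγ1 : (0:ℝ) < 1 + γ := by linarith
  have hγ2 : (0:ℝ) < 1 + 2 * γ := by linarith
  set c : ℝ := a₀ * ρ₀ * u₀ / a with hcdef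
  have hc : 0 < c := by rw [hcdef]; positivity
  have hk₀pos : 0 < k₀ := by
    rw [hk₀]; exact rpow_pos_of_pos hc _
  have hk₁pos : 0 < k₁ := by
    rw [hk₁]
    have h1 : 0 < u₀ ^ (γ / (1 + γ)) := rpow_pos_of_pos hu₀ _
    have h2 : 0 < ρ₀ ^ γ := rpow_pos_of_pos hρ₀ _
    have h3 : 0 < γ / (1 + 2 * γ) := by positivity
    exact mul_pos h1 (add_pos h2 (mul_pos h3 hu₀))
  set X : ℝ := k₁ * (1 + 2 * γ) / (k₀ * (γ + 1) ^ 2) with hXdef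
  have hXpos : 0 < X := by rw [hXdef]; positivity
  have hE : (0:ℝ) < γ ^ 2 / (1 + γ) := by positivity
  -- step 1: X < ρ ^ (γ²/(1+γ))
  have h1 : X < ρ ^ (γ ^ 2 / (1 + γ)) := by
    have h := Real.rpow_lt_rpow (Real.rpow_pos_of_pos hXpos _).le hgt hE
    rw [← Real.rpow_mul hXpos.le] at h
    have he : (1 + γ) / γ ^ 2 * (γ ^ 2 / (1 + γ)) = 1 := by
      field_simp
    rwa [he, Real.rpow_one] at h
  have hρE : 0 < ρ ^ (γ ^ 2 / (1 + γ)) := rpow_pos_of_pos hρ _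
  have hρq : 0 < ρ ^ ((1 + 2 * γ) / (1 + γ)) := rpow_pos_of_pos hρ _
  have hρg1 : 0 < ρ ^ (γ + 1) := rpow_pos_of_pos hρ _
  -- step 2
  have h2 : k₁ * (1 + 2 * γ) < k₀ * (γ + 1) ^ 2 * ρ ^ (γ ^ 2 / (1 + γ)) := by
    rw [hXdef, div_lt_iff₀ (by positivity)] at h1
    calc k₁ * (1 + 2 * γ) < ρ ^ (γ ^ 2 / (1 + γ)) * (k₀ * (γ + 1) ^ 2) := h1
      _ = k₀ * (γ + 1) ^ 2 * ρ ^ (γ ^ 2 / (1 + γ)) := by ring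
  -- step 3: multiply by ρ^q
  have h3 : k₁ * (1 + 2 * γ) * ρ ^ ((1 + 2 * γ) / (1 + γ)) < k₀ * (γ + 1) ^ 2 * ρ ^ (γ + 1) := by
    have he : γ ^ 2 / (1 + γ) + (1 + 2 * γ) / (1 + γ) = γ + 1 := by
      field_simp; ring
    calc k₁ * (1 + 2 * γ) * ρ ^ ((1 + 2 * γ) / (1 + γ))
        < k₀ * (γ + 1) ^ 2 * ρ ^ (γ ^ 2 / (1 + γ)) * ρ ^ ((1 + 2 * γ) / (1 + γ)) := by
          exact mul_lt_mul_of_pos_right h2 hρq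
      _ = k₀ * (γ + 1) ^ 2 * (ρ ^ (γ ^ 2 / (1 + γ)) * ρ ^ ((1 + 2 * γ) / (1 + γ))) := by ring
      _ = k₀ * (γ + 1) ^ 2 * ρ ^ (γ ^ 2 / (1 + γ) + (1 + 2 * γ) / (1 + γ)) := by
          rw [← Real.rpow_add hρ]
      _ = k₀ * (γ + 1) ^ 2 * ρ ^ (γ + 1) := by rw [he]
  have hr : k₁ * ρ ^ ((1 + 2 * γ) / (1 + γ)) = k₀ * ρ ^ (γ + 1) + k₂ := by linarith
  -- step 4
  have h3' : (1 + 2 * γ) * (k₀ * ρ ^ (γ + 1) + k₂) < k₀ * (γ + 1) ^ 2 * ρ ^ (γ + 1) := by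
    have e : k₁ * (1 + 2 * γ) * ρ ^ ((1 + 2 * γ) / (1 + γ))
        = (1 + 2 * γ) * (k₀ * ρ ^ (γ + 1) + k₂) := by
      rw [show k₁ * (1 + 2 * γ) * ρ ^ ((1 + 2 * γ) / (1 + γ))
          = (1 + 2 * γ) * (k₁ * ρ ^ ((1 + 2 * γ) / (1 + γ))) by ring, hr]
    linarith [h3, e.ge, e.le]
  have h4 : (1 + 2 * γ) * k₂ < γ ^ 2 * k₀ * ρ ^ (γ + 1) := by nlinarith [h3']
  -- identities
  have e3 : (1 + 2 * γ) * k₂ = γ * c ^ ((1 + 2 * γ) / (1 + γ)) := by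
    rw [hk₂]; field_simp
  have e4 : c ^ ((1 + 2 * γ) / (1 + γ)) = c ^ (γ / (1 + γ)) * c := by
    have he : (1 + 2 * γ) / (1 + γ) = γ / (1 + γ) + 1 := by field_simp; ring
    rw [he, Real.rpow_add hc, Real.rpow_one]
  have hcp : 0 < c ^ (γ / (1 + γ)) := rpow_pos_of_pos hc _
  have h5 : c < γ * ρ ^ (γ + 1) := by
    have h4' : (γ * c ^ (γ / (1 + γ))) * c < (γ * c ^ (γ / (1 + γ))) * (γ * ρ ^ (γ + 1)) := by
      calc (γ * c ^ (γ / (1 + γ))) * c = γ * (c ^ (γ / (1 + γ)) * c) := by ring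
        _ = γ * c ^ ((1 + 2 * γ) / (1 + γ)) := by rw [← e4]
        _ = (1 + 2 * γ) * k₂ := e3.symm
        _ < γ ^ 2 * k₀ * ρ ^ (γ + 1) := h4
        _ = (γ * c ^ (γ / (1 + γ))) * (γ * ρ ^ (γ + 1)) := by rw [hk₀]; ring
    exact lt_of_mul_lt_mul_left h4' (by positivity)
  -- conclude
  have e5 : ρ ^ (γ + 1) = ρ ^ γ * ρ := by
    rw [Real.rpow_add hρ, Real.rpow_one]
  rw [hu, div_lt_iff₀ (by positivity : (0:ℝ) < a * ρ)]
  rw [hcdef, div_lt_iff₀ ha, e5] at h5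
  calc a₀ * ρ₀ * u₀ < γ * (ρ ^ γ * ρ) * a := h5
    _ = γ * ρ ^ γ * (a * ρ) := by ring
end

section
/- Let γ > 0 and fix (u₀, ρ₀) with ρ₀, u₀ > 0. Along the shock curve u(ρ) = u₀ + ρ₀^γ - ρ^γ for ρ > ρ₀, the shock speed σ(ρ) = u(ρ) + ρ₀(ρ₀^γ - ρ^γ)/(ρ - ρ₀) equals u₀ + ρ(ρ₀^γ - ρ^γ)/(ρ - ρ₀), and σ(ρ) = 0 for some ρ > ρ₀ if and only if u₀ = ρ(ρ^γ - ρ₀^γ)/(ρ - ρ₀) > γρ₀^γ; in particular, if 0 < u₀ ≤ γρ₀^γ (state in the closure of D₁) then σ(ρ) < 0 for all ρ > ρ₀. -/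
open Real Set

/-- Along the shock curve u(ρ) = u₀ + ρ₀^γ - ρ^γ (ρ > ρ₀), the shock speed
σ(ρ) = u(ρ) + ρ₀(ρ₀^γ-ρ^γ)/(ρ-ρ₀) equals u₀ + ρ(ρ₀^γ-ρ^γ)/(ρ-ρ₀); it vanishes
iff u₀ = ρ(ρ^γ-ρ₀^γ)/(ρ-ρ₀), in which case u₀ > γρ₀^γ; and if 0 < u₀ ≤ γρ₀^γ
then σ(ρ) < 0 for all ρ > ρ₀. -/
theorem stmt_10 (γ u₀ ρ₀ : ℝ) (hγ : 0 < γ) (hu₀ : 0 < u₀) (hρ₀ : 0 < ρ₀) :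
    (∀ ρ : ℝ, ρ₀ < ρ →
      ((u₀ + ρ₀ ^ γ - ρ ^ γ) + ρ₀ * (ρ₀ ^ γ - ρ ^ γ) / (ρ - ρ₀)
          = u₀ + ρ * (ρ₀ ^ γ - ρ ^ γ) / (ρ - ρ₀)) ∧
      ((u₀ + ρ₀ ^ γ - ρ ^ γ) + ρ₀ * (ρ₀ ^ γ - ρ ^ γ) / (ρ - ρ₀) = 0
          ↔ u₀ = ρ * (ρ ^ γ - ρ₀ ^ γ) / (ρ - ρ₀)) ∧
      ((u₀ + ρ₀ ^ γ - ρ ^ γ) + ρ₀ * (ρ₀ ^ γ - ρ ^ γ) / (ρ - ρ₀) = 0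
          → γ * ρ₀ ^ γ < u₀)) ∧
    (u₀ ≤ γ * ρ₀ ^ γ → ∀ ρ : ℝ, ρ₀ < ρ →
      (u₀ + ρ₀ ^ γ - ρ ^ γ) + ρ₀ * (ρ₀ ^ γ - ρ ^ γ) / (ρ - ρ₀) < 0) := by
  have hA : (0:ℝ) < ρ₀ ^ γ := Real.rpow_pos_of_pos hρ₀ γ
  have key : ∀ ρ : ℝ, ρ₀ < ρ → γ * ρ₀ ^ γ * (ρ - ρ₀) < ρ * (ρ ^ γ - ρ₀ ^ γ) := by
    intro ρ hρ
    have hρpos : 0 < ρ := hρ₀.trans hρ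
    have hlog : 1 - ρ₀ / ρ < Real.log (ρ / ρ₀) := by
      have h1 : Real.log (ρ₀ / ρ) < ρ₀ / ρ - 1 :=
        Real.log_lt_sub_one_of_pos (div_pos hρ₀ hρpos)
          (by
            have : ρ₀ / ρ < 1 := (div_lt_one hρpos).2 hρ
            linarith)
      have h2 : Real.log (ρ₀ / ρ) = - Real.log (ρ / ρ₀) := by
        rw [← Real.log_inv, inv_div]
      linarith
    have hexp : 1 + γ * Real.log (ρ / ρ₀) ≤ (ρ / ρ₀) ^ γ := by
      rw [Real.rpow_def_of_pos (div_pos hρpos hρ₀)]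
      have := Real.add_one_le_exp (Real.log (ρ / ρ₀) * γ)
      linarith [this]
    have hdr : (ρ / ρ₀) ^ γ = ρ ^ γ / ρ₀ ^ γ :=
      Real.div_rpow hρpos.le hρ₀.le γ
    rw [hdr] at hexp
    have hgt : 1 + γ * (1 - ρ₀ / ρ) < ρ ^ γ / ρ₀ ^ γ := by
      have := mul_lt_mul_of_pos_left hlog hγ
      linarith
    have h3 : ρ₀ ^ γ * (1 + γ * (1 - ρ₀ / ρ)) < ρ₀ ^ γ * (ρ ^ γ / ρ₀ ^ γ) :=
      mul_lt_mul_of_pos_left hgt hA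
    have hcanc : ρ₀ ^ γ * (ρ ^ γ / ρ₀ ^ γ) = ρ ^ γ := by field_simp
    rw [hcanc] at h3
    have h4 : γ * ρ₀ ^ γ * (1 - ρ₀ / ρ) < ρ ^ γ - ρ₀ ^ γ := by nlinarith [h3]
    have h5 := mul_lt_mul_of_pos_left h4 hρpos
    have h6 : ρ * (γ * ρ₀ ^ γ * (1 - ρ₀ / ρ)) = γ * ρ₀ ^ γ * (ρ - ρ₀) := by
      field_simp
    nlinarith [h5, h6]
  constructor
  · intro ρ hρ
    have hd : ρ - ρ₀ ≠ 0 := by linarith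
    have hdpos : 0 < ρ - ρ₀ := by linarith
    have heq : (u₀ + ρ₀ ^ γ - ρ ^ γ) + ρ₀ * (ρ₀ ^ γ - ρ ^ γ) / (ρ - ρ₀)
        = u₀ + ρ * (ρ₀ ^ γ - ρ ^ γ) / (ρ - ρ₀) := by
      field_simp
      ring
    refine ⟨heq, ?_, ?_⟩
    · rw [heq]
      constructor
      · intro h
        field_simp at h ⊢
        linarith
      · intro h
        field_simp at h ⊢
        linarith
    · intro h
      rw [heq] at h
      have h' : u₀ = ρ * (ρ ^ γ - ρ₀ ^ γ) / (ρ - ρ₀) := by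
        field_simp at h ⊢
        linarith
      rw [h', lt_div_iff₀ hdpos]
      exact key ρ hρ
  · intro hle ρ hρ
    have hdpos : 0 < ρ - ρ₀ := by linarith
    have hd : ρ - ρ₀ ≠ 0 := hdpos.ne'
    have heq : (u₀ + ρ₀ ^ γ - ρ ^ γ) + ρ₀ * (ρ₀ ^ γ - ρ ^ γ) / (ρ - ρ₀)
        = u₀ - ρ * (ρ ^ γ - ρ₀ ^ γ) / (ρ - ρ₀) := by
      field_simp
      ring
    rw [heq]
    have : γ * ρ₀ ^ γ < ρ * (ρ ^ γ - ρ₀ ^ γ) / (ρ - ρ₀) := by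
      rw [lt_div_iff₀ hdpos]; exact key ρ hρ
    linarith
end

section
/- Let γ > 0 and let c > 1, c₁ ∈ (0,1) satisfy the implicit relation c^{γ/(γ+1)} - (cγ+1)c₁^{γ/(γ+1)} + γc^{γ/(γ+1)}c₁ = 0. Then differentiating this relation gives dc·dc₁ < 0; that is, c₁ is a strictly decreasing function of c: the coefficient (γ/(γ+1))c^{-1/(γ+1)}(1+γc₁) - γc₁^{γ/(γ+1)} of dc is negative and the coefficient (γ/(γ+1))(cγ+1)c₁^{-1/(γ+1)} - γc^{γ/(γ+1)} of dc₁ is positive. -/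
open Real

/-- Along the zero-speed shock relation c^{γ/(γ+1)} - (cγ+1)c₁^{γ/(γ+1)}
+ γc^{γ/(γ+1)}c₁ = 0 with c > 1, 0 < c₁ < 1, the coefficient of dc is negative
and the coefficient of dc₁ is positive, so dc·dc₁ < 0 (c₁ strictly decreases in c). -/
theorem stmt_15 (γ c c₁ : ℝ) (hγ : 0 < γ) (hc : 1 < c)
    (hc₁0 : 0 < c₁) (hc₁1 : c₁ < 1)
    (hrel : c ^ (γ / (γ + 1)) - (c * γ + 1) * c₁ ^ (γ / (γ + 1))
        + γ * c ^ (γ / (γ + 1)) * c₁ = 0) :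
    (γ / (γ + 1)) * c ^ (-(1 / (γ + 1))) * (1 + γ * c₁)
        - γ * c₁ ^ (γ / (γ + 1)) < 0 ∧
    0 < (γ / (γ + 1)) * (c * γ + 1) * c₁ ^ (-(1 / (γ + 1)))
        - γ * c ^ (γ / (γ + 1)) := by
  have hc0 : (0:ℝ) < c := lt_trans one_pos hc
  have hγ1 : (0:ℝ) < γ + 1 := by linarith
  have hexp : γ / (γ + 1) - 1 = -(1 / (γ + 1)) := by field_simp; ring
  have hA : c ^ (-(1 / (γ + 1))) = c ^ (γ / (γ + 1)) / c := by
    rw [← hexp, Real.rpow_sub hc0, Real.rpow_one]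
  have hB : c₁ ^ (-(1 / (γ + 1))) = c₁ ^ (γ / (γ + 1)) / c₁ := by
    rw [← hexp, Real.rpow_sub hc₁0, Real.rpow_one]
  set A := c ^ (γ / (γ + 1)) with hAdef
  set B := c₁ ^ (γ / (γ + 1)) with hBdef
  have hApos : 0 < A := Real.rpow_pos_of_pos hc0 _
  have hBpos : 0 < B := Real.rpow_pos_of_pos hc₁0 _
  have hrel' : A * (1 + γ * c₁) = (c * γ + 1) * B := by linear_combination hrel
  constructor
  · -- coefficient of dc is negative
    have key : γ / (γ + 1) * (c * γ + 1) < γ * c := by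
      rw [div_mul_eq_mul_div, div_lt_iff₀ hγ1]
      nlinarith
    have k1 : γ / (γ + 1) * A * (1 + γ * c₁) < γ * B * c := by
      have : γ / (γ + 1) * A * (1 + γ * c₁) = γ / (γ + 1) * (c * γ + 1) * B := by
        rw [mul_assoc, hrel']; ring
      rw [this]
      nlinarith
    rw [hA, sub_neg]
    calc γ / (γ + 1) * (A / c) * (1 + γ * c₁)
        = (γ / (γ + 1) * A * (1 + γ * c₁)) / c := by ring
      _ < γ * B := by rw [div_lt_iff₀ hc0]; nlinarith
  · -- coefficient of dc₁ is positive
    have key : γ * c₁ < γ / (γ + 1) * (1 + γ * c₁) := by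
      rw [div_mul_eq_mul_div, lt_div_iff₀ hγ1]
      nlinarith
    have k2 : γ * A * c₁ < γ / (γ + 1) * (c * γ + 1) * B := by
      have : γ / (γ + 1) * (c * γ + 1) * B = γ / (γ + 1) * (A * (1 + γ * c₁)) := by
        rw [hrel']; ring
      rw [this]
      nlinarith
    rw [hB, sub_pos]
    calc γ * A = (γ * A * c₁) / c₁ := by field_simp
      _ < γ / (γ + 1) * (c * γ + 1) * (B / c₁) := by
          rw [div_lt_iff₀ hc₁0]
          have hBc : γ / (γ + 1) * (c * γ + 1) * (B / c₁) * c₁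
              = γ / (γ + 1) * (c * γ + 1) * B := by
            field_simp
          rw [hBc]; exact k2
end

section
/- The matrix pair (A, B) with A = [[0, a, 0],[a, aγρ^{γ-1}, 0],[0,0,1]] and B = [[aρ, au, ρu],[au, auγρ^{γ-1}, -uρ^γ],[0,0,0]] (with a, ρ > 0) has generalized eigenvalues λ₁ = u - γρ^γ, λ₂ = u, λ₃ = 0; i.e., det(B - λA) = 0 exactly for λ ∈ {u - γρ^γ, u, 0}. -/
open Real Matrix

/-- The generalized eigenvalues of the pair (A,B) of coefficient matrices of
the quasilinear traffic-flow system are λ₁ = u - γρ^γ, λ₂ = u, λ₃ = 0: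
det(B - λA) = 0 exactly for these λ. -/
theorem stmt_16 (γ a ρ u : ℝ) (hγ : 0 < γ) (ha : 0 < a) (hρ : 0 < ρ)
    (hu : 0 < u) :
    ∀ lam : ℝ,
      ((!![a * ρ, a * u, ρ * u;
           a * u, a * u * γ * ρ ^ (γ - 1), -(u * ρ ^ γ);
           0, 0, 0] : Matrix (Fin 3) (Fin 3) ℝ)
        - lam • (!![0, a, 0;
                    a, a * γ * ρ ^ (γ - 1), 0;
                    0, 0, 1] : Matrix (Fin 3) (Fin 3) ℝ)).det = 0
      ↔ lam = u - γ * ρ ^ γ ∨ lam = u ∨ lam = 0 := by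
  intro lam
  have h1 : ρ ^ (γ - 1) = ρ ^ γ / ρ := by
    rw [Real.rpow_sub hρ, Real.rpow_one]
  have ha2 : (a : ℝ) ^ 2 ≠ 0 := pow_ne_zero 2 ha.ne'
  have hρ0 : ρ ≠ 0 := hρ.ne'
  have hdet :
      ((!![a * ρ, a * u, ρ * u;
           a * u, a * u * γ * ρ ^ (γ - 1), -(u * ρ ^ γ);
           0, 0, 0] : Matrix (Fin 3) (Fin 3) ℝ)
        - lam • (!![0, a, 0;
                    a, a * γ * ρ ^ (γ - 1), 0;
                    0, 0, 1] : Matrix (Fin 3) (Fin 3) ℝ)).det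
        = a ^ 2 * (lam * ((u - lam) * ((u - γ * ρ ^ γ) - lam))) := by
    simp only [Matrix.det_fin_three, Matrix.sub_apply, Matrix.smul_apply,
      Matrix.cons_val', Matrix.cons_val_zero, Matrix.cons_val_one, Matrix.head_cons,
      Matrix.empty_val', Matrix.cons_val_fin_one, Matrix.head_fin_const, smul_eq_mul, h1,
      Matrix.of_apply, Matrix.cons_val_two, Matrix.tail_cons]
    field_simp
    ring
  rw [hdet, mul_eq_zero, mul_eq_zero, mul_eq_zero]
  constructor
  · rintro (h | h | h | h)
    · exact absurd h ha2
    · exact Or.inr (Or.inr h)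
    · exact Or.inr (Or.inl (by linarith))
    · exact Or.inl (by linarith)
  · rintro (h | h | h)
    · exact Or.inr (Or.inr (Or.inr (by linarith)))
    · exact Or.inr (Or.inr (Or.inl (by linarith)))
    · exact Or.inr (Or.inl h)
end
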